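/- Let X be a finite nonempty set, let Π and P be full-support probability distributions on X, set r(x) = P(x)/Π(x), α = max_{x∈X} P(x)/Π(x) and β = max_{x∈X} Π(x)/P(x). Then E_{Y∼Π}[(log r(Y))²] ≤ max{α, β²} − 1. -/

import Mathlib

open Finset

lemma two_log_le_aux (u : ℝ) (hu : 1 ≤ u) : 2 * Real.log u ≤ u - u⁻¹ := by
  have hd : ∀ x : ℝ, 0 < x →
      HasDerivAt (fun v : ℝ => v - v⁻¹ - 2 * Real.log v)
        (1 - (-(x ^ 2)⁻¹) - 2 * x⁻¹) x := by
    intro x hx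
    exact ((hasDerivAt_id x).sub (hasDerivAt_inv hx.ne')).sub
      ((Real.hasDerivAt_log hx.ne').const_mul 2)
  have hmono : MonotoneOn (fun v : ℝ => v - v⁻¹ - 2 * Real.log v) (Set.Ici 1) := by
    apply monotoneOn_of_deriv_nonneg (convex_Ici 1)
    · intro x hx
      have hx0 : (0:ℝ) < x := lt_of_lt_of_le one_pos hx
      exact (hd x hx0).continuousAt.continuousWithinAt
    · intro x hx
      rw [interior_Ici] at hx
      have hx0 : (0:ℝ) < x := lt_trans one_pos hx
      exact (hd x hx0).differentiableAt.differentiableWithinAt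
    · intro x hx
      rw [interior_Ici] at hx
      have hx0 : (0:ℝ) < x := lt_trans one_pos hx
      rw [(hd x hx0).deriv]
      have h1 : x⁻¹ ≤ 1 := by
        have := inv_anti₀ one_pos (le_of_lt (Set.mem_Ioi.mp hx))
        simpa using this
      have h2 : (x ^ 2)⁻¹ = x⁻¹ ^ 2 := by
        rw [sq, sq, mul_inv]
      rw [h2]
      nlinarith [sq_nonneg (1 - x⁻¹)]
  have h := hmono (Set.self_mem_Ici) (Set.mem_Ici.mpr hu) hu
  simp only [inv_one, Real.log_one] at h
  linarith

lemma sq_log_le_one (t : ℝ) (ht : 0 < t) (h1 : 1 ≤ t) :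
    (Real.log t) ^ 2 ≤ (t - 1) ^ 2 / t := by
  set u := Real.sqrt t with hu
  have hu1 : 1 ≤ u := by
    rw [hu, show (1:ℝ) = Real.sqrt 1 by simp]
    exact Real.sqrt_le_sqrt h1
  have hu0 : 0 < u := lt_of_lt_of_le one_pos hu1
  have husq : u ^ 2 = t := Real.sq_sqrt ht.le
  have hlog : Real.log t = 2 * Real.log u := by
    rw [← husq, Real.log_pow]; push_cast; ring
  have hkey := two_log_le_aux u hu1
  have hlogt0 : 0 ≤ Real.log t := Real.log_nonneg h1
  have hub : Real.log t ≤ u - u⁻¹ := by rw [hlog]; exact hkey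
  have hrhs : (u - u⁻¹) ^ 2 = (t - 1) ^ 2 / t := by
    rw [← husq]; field_simp
  rw [← hrhs]
  nlinarith [hub, hlogt0]

lemma sq_log_le (t : ℝ) (ht : 0 < t) : (Real.log t) ^ 2 ≤ (t - 1) ^ 2 / t := by
  rcases le_total 1 t with h1 | h1
  · exact sq_log_le_one t ht h1
  · have ht' : (0:ℝ) < t⁻¹ := inv_pos.mpr ht
    have h1' : 1 ≤ t⁻¹ := by
      have := inv_anti₀ ht h1
      simpa using this
    have h := sq_log_le_one t⁻¹ ht' h1'
    rw [Real.log_inv] at h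
    have heq : (t⁻¹ - 1) ^ 2 / t⁻¹ = (t - 1) ^ 2 / t := by
      field_simp; ring
    rw [heq] at h
    simpa using h

theorem log_ratio_second_moment_bound {X : Type*} [Fintype X] [Nonempty X]
    (Pi P : X → ℝ)
    (hPipos : ∀ x, 0 < Pi x) (hPisum : ∑ x, Pi x = 1)
    (hPpos : ∀ x, 0 < P x) (hPsum : ∑ x, P x = 1) :
    ∑ x, (Real.log (P x / Pi x)) ^ 2 * Pi x
      ≤ max (univ.sup' univ_nonempty (fun x => P x / Pi x))
            ((univ.sup' univ_nonempty (fun x => Pi x / P x)) ^ 2) - 1 := by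
  set β := univ.sup' univ_nonempty (fun x => Pi x / P x) with hβ
  have hβle : ∀ x : X, Pi x / P x ≤ β := fun x =>
    le_sup' (fun x => Pi x / P x) (mem_univ x)
  -- β ≥ 1
  have hβ1 : 1 ≤ β := by
    by_contra hcon
    push_neg at hcon
    have hall : ∀ x : X, Pi x < P x := by
      intro x
      have := lt_of_le_of_lt (hβle x) hcon
      have hP := hPpos x
      rw [div_lt_one hP] at this
      exact this
    have : ∑ x, Pi x < ∑ x, P x :=
      Finset.sum_lt_sum_of_nonempty univ_nonempty (fun x _ => hall x)
    rw [hPisum, hPsum] at this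
    exact lt_irrefl 1 this
  -- pointwise bound
  have hpt : ∀ x : X, (Real.log (P x / Pi x)) ^ 2 * Pi x
      ≤ (Pi x) ^ 2 / P x - 2 * Pi x + P x := by
    intro x
    have hPi := hPipos x
    have hP := hPpos x
    have hr : 0 < P x / Pi x := div_pos hP hPi
    have h := sq_log_le _ hr
    have h2 : (Real.log (P x / Pi x)) ^ 2 * Pi x
        ≤ ((P x / Pi x - 1) ^ 2 / (P x / Pi x)) * Pi x :=
      mul_le_mul_of_nonneg_right h hPi.le
    have heq : ((P x / Pi x - 1) ^ 2 / (P x / Pi x)) * Pi x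
        = (Pi x) ^ 2 / P x - 2 * Pi x + P x := by
      field_simp
      ring
    linarith [heq ▸ h2]
  have hsum1 : ∑ x, (Real.log (P x / Pi x)) ^ 2 * Pi x
      ≤ ∑ x, ((Pi x) ^ 2 / P x - 2 * Pi x + P x) :=
    Finset.sum_le_sum (fun x _ => hpt x)
  have hsum2 : ∑ x, ((Pi x) ^ 2 / P x - 2 * Pi x + P x)
      = (∑ x, (Pi x) ^ 2 / P x) - 1 := by
    rw [Finset.sum_add_distrib, Finset.sum_sub_distrib, ← Finset.mul_sum, hPisum, hPsum]
    ring
  have hsum3 : ∑ x, (Pi x) ^ 2 / P x ≤ β := by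
    calc ∑ x, (Pi x) ^ 2 / P x = ∑ x, (Pi x / P x) * Pi x := by
          apply Finset.sum_congr rfl
          intro x _
          rw [sq]
          field_simp
      _ ≤ ∑ x, β * Pi x :=
          Finset.sum_le_sum (fun x _ =>
            mul_le_mul_of_nonneg_right (hβle x) (hPipos x).le)
      _ = β := by rw [← Finset.mul_sum, hPisum, mul_one]
  have hββ : β ≤ β ^ 2 := by nlinarith
  have hmax : β ^ 2 ≤ max (univ.sup' univ_nonempty (fun x => P x / Pi x)) (β ^ 2) :=
    le_max_right _ _
  linarith
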